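/- Every connected multigraph (loopless) of even order admits an odd 3-edge-coloring, i.e., its edges can be partitioned into at most 3 classes each inducing a subgraph with all nonzero degrees odd. -/

import Mathlib

namespace OddColor3X

attribute [local instance] Classical.propDecidable
set_option linter.unusedSectionVars false
set_option linter.unusedVariables false

open Finset

variable {V E : Type*} [Fintype V] [Fintype E]

noncomputable def pdeg (ends : E → Sym2 V) (A : Finset E) (v : V) : ZMod 2 :=
  ((A.filter fun e => v ∈ ends e).card : ZMod 2)

lemma pdeg_eq_sum (ends : E → Sym2 V) (A : Finset E) (v : V) :
    pdeg ends A v = ∑ e ∈ A, if v ∈ ends e then (1 : ZMod 2) else 0 := by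
  rw [pdeg, card_filter]
  push_cast
  exact Finset.sum_congr rfl fun e _ => by split <;> simp

/-- edge set of the tree path from `v` to the root -/
noncomputable def ch (r : V) (par : V → V) (pe : V → E) (depth : V → ℕ)
    (hd : ∀ v, v ≠ r → depth (par v) < depth v) (v : V) : Finset E :=
  if h : v = r then ∅ else insert (pe v) (ch r par pe depth hd (par v))
termination_by depth v
decreasing_by exact hd v h

/-- the forest 2-coloring -/
noncomputable def tc (r : V) (par : V → V) (depth : V → ℕ) (S' : Finset V)
    (mn : Finset V → Option V)
    (hd : ∀ v, v ≠ r → depth (par v) < depth v) (w : V) : Fin 2 :=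
  if hw : w = r then 0
  else
    if ((S'.filter fun u => par u = par w).card % 2 = if par w ∈ S' then 1 else 0)
        ∧ mn (S'.filter fun u => par u = par w) = some w then
      (if par w ∈ S' then tc r par depth S' mn hd (par w) else 0) + 1
    else
      (if par w ∈ S' then tc r par depth S' mn hd (par w) else 0)
termination_by depth w
decreasing_by all_goals exact hd w hw

lemma parne (r : V) (par : V → V) (depth : V → ℕ)
    (hd : ∀ v, v ≠ r → depth (par v) < depth v) (v : V) (hv : v ≠ r) : par v ≠ v := by
  intro h
  have := hd v hv
  rw [h] at this
  omega

lemma peinj (ends : E → Sym2 V) (r : V) (par : V → V) (pe : V → E) (depth : V → ℕ)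
    (hd : ∀ v, v ≠ r → depth (par v) < depth v)
    (hpe : ∀ v, v ≠ r → ends (pe v) = s(v, par v))
    (u w : V) (hu : u ≠ r) (hw : w ≠ r) (h : pe u = pe w) : u = w := by
  have h2 : ends (pe u) = ends (pe w) := by rw [h]
  rw [hpe u hu, hpe w hw, Sym2.eq_iff] at h2
  rcases h2 with ⟨h3, _⟩ | ⟨h3, h4⟩
  · exact h3
  · exfalso
    have d1 : depth (par w) < depth w := hd w hw
    have d2 : depth (par u) < depth u := hd u hu
    subst h3
    rw [h4] at d2
    omega

lemma ch_mem (r : V) (par : V → V) (pe : V → E) (depth : V → ℕ)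
    (hd : ∀ v, v ≠ r → depth (par v) < depth v) :
    ∀ n (v : V), depth v ≤ n → ∀ e ∈ ch r par pe depth hd v,
      ∃ u, u ≠ r ∧ pe u = e ∧ depth u ≤ depth v := by
  intro n
  induction n with
  | zero =>
    intro v hv e he
    rw [ch] at he
    split at he
    · simp at he
    · rename_i h
      have := hd v h; omega
  | succ n IH =>
    intro v hv e he
    rw [ch] at he
    split at he
    · simp at he
    · rename_i h
      rcases Finset.mem_insert.mp he with h1 | h1
      · exact ⟨v, h, h1.symm, le_rfl⟩
      · obtain ⟨u, hu1, hu2, hu3⟩ := IH (par v) (by have := hd v h; omega) e h1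
        exact ⟨u, hu1, hu2, by have := hd v h; omega⟩

lemma mem_pe (ends : E → Sym2 V) (r : V) (par : V → V) (pe : V → E)
    (hpe : ∀ v, v ≠ r → ends (pe v) = s(v, par v))
    (u : V) (hu : u ≠ r) (v : V) :
    v ∈ ends (pe u) ↔ v = u ∨ v = par u := by
  rw [hpe u hu, Sym2.mem_iff]

lemma ch_pdeg (ends : E → Sym2 V) (r : V) (par : V → V) (pe : V → E) (depth : V → ℕ)
    (hd : ∀ v, v ≠ r → depth (par v) < depth v)
    (hpe : ∀ v, v ≠ r → ends (pe v) = s(v, par v)) :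
    ∀ n (v : V), depth v ≤ n → ∀ u : V,
      pdeg ends (ch r par pe depth hd v) u
        = (if u = v then 1 else 0) + (if u = r then 1 else 0) := by
  intro n
  induction n with
  | zero =>
    intro v hv u
    rw [ch]
    split
    · rename_i h
      rw [pdeg]
      simp only [Finset.filter_empty, Finset.card_empty, Nat.cast_zero, h]
      by_cases h2 : u = r
      · rw [if_pos h2]; decide
      · rw [if_neg h2]; decide
    · rename_i h
      have := hd v h; omega
  | succ n IH =>
    intro v hv u
    rw [ch]
    split
    · rename_i h
      rw [pdeg]
      simp only [Finset.filter_empty, Finset.card_empty, Nat.cast_zero, h]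
      by_cases h2 : u = r
      · rw [if_pos h2]; decide
      · rw [if_neg h2]; decide
    · rename_i h
      have hnm : pe v ∉ ch r par pe depth hd (par v) := by
        intro hcon
        obtain ⟨w, hw1, hw2, hw3⟩ := ch_mem r par pe depth hd n (par v)
          (by have := hd v h; omega) (pe v) hcon
        have hwv : w = v := peinj ends r par pe depth hd hpe w v hw1 h hw2
        rw [hwv] at hw3
        have := hd v h; omega
      rw [pdeg, Finset.filter_insert]
      have hrest := IH (par v) (by have := hd v h; omega) u
      rw [pdeg] at hrest
      have hmemiff := mem_pe ends r par pe hpe v h u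
      by_cases hin : u ∈ ends (pe v)
      · rw [if_pos hin, Finset.card_insert_of_notMem (fun hc => hnm (Finset.mem_filter.mp hc).1)]
        push_cast
        rw [hrest]
        rcases hmemiff.mp hin with h1 | h1
        · have h2 : ¬ (u = par v) := fun hc => parne r par depth hd v h (hc ▸ h1)
          rw [if_neg h2, if_pos h1]
          generalize (if u = r then (1 : ZMod 2) else 0) = a
          revert a; decide
        · have h2 : ¬ (u = v) := by
            intro hc
            exact parne r par depth hd v h (by rw [← h1, hc])
          rw [if_pos h1, if_neg h2]
          generalize (if u = r then (1 : ZMod 2) else 0) = a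
          revert a; decide
      · rw [if_neg hin, hrest]
        have h1 : ¬ (u = v) := fun hc => hin (hmemiff.mpr (Or.inl hc))
        have h2 : ¬ (u = par v) := fun hc => hin (hmemiff.mpr (Or.inr hc))
        rw [if_neg h1, if_neg h2]

lemma verify (r : V) (par : V → V) (depth : V → ℕ)
    (hd : ∀ v, v ≠ r → depth (par v) < depth v) (S' : Finset V)
    (mn : Finset V → Option V)
    (hmn : ∀ s : Finset V, s.Nonempty → ∃ m, m ∈ s ∧ mn s = some m)
    (hS' : ∀ u ∈ S', u ≠ r) (v : V) (c : Fin 2) :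
    ((if v ∈ S' ∧ tc r par depth S' mn hd v = c then 1 else 0)
      + (S'.filter fun u => par u = v ∧ tc r par depth S' mn hd u = c).card) = 0 ∨
    Odd ((if v ∈ S' ∧ tc r par depth S' mn hd v = c then 1 else 0)
      + (S'.filter fun u => par u = v ∧ tc r par depth S' mn hd u = c).card) := by
  have hno : ∀ a : Fin 2, a ≠ a + 1 := by decide
  have child_eq : ∀ u ∈ S'.filter (fun u => par u = v),
      tc r par depth S' mn hd u =
        if ((S'.filter (fun u => par u = v)).card % 2 = if v ∈ S' then 1 else 0)
            ∧ mn (S'.filter (fun u => par u = v)) = some u then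
          (if v ∈ S' then tc r par depth S' mn hd v else 0) + 1
        else
          (if v ∈ S' then tc r par depth S' mn hd v else 0) := by
    intro u hu
    rw [Finset.mem_filter] at hu
    have hur : u ≠ r := hS' u hu.1
    conv_lhs => rw [tc]
    rw [dif_neg hur]
    simp only [hu.2]
  have hfilter : (S'.filter fun u => par u = v ∧ tc r par depth S' mn hd u = c)
      = (S'.filter (fun u => par u = v)).filter
          (fun u => tc r par depth S' mn hd u = c) := by
    rw [Finset.filter_filter]
  set tcf := tc r par depth S' mn hd with htcf
  set K := S'.filter (fun u => par u = v) with hK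
  set main : Fin 2 := (if v ∈ S' then tcf v else 0) with hmain
  have haddne : (main + 1 : Fin 2) ≠ main := fun h => hno main h.symm
  have hc2 : c = main ∨ c = main + 1 := by
    have : ∀ a b : Fin 2, b = a ∨ b = a + 1 := by decide
    exact this main c
  have hownmain : v ∈ S' → tcf v = main := by
    intro hvS; rw [hmain, if_pos hvS]
  by_cases htrb : (K.card % 2 = if v ∈ S' then 1 else 0)
  · rcases Finset.eq_empty_or_nonempty K with hKe | hKne
    · rw [hfilter, hKe, Finset.filter_empty, Finset.card_empty]
      by_cases hown : v ∈ S' ∧ tcf v = c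
      · rw [if_pos hown]; right; decide
      · rw [if_neg hown]; left; rfl
    · obtain ⟨m, hmK, hmin⟩ := hmn K hKne
      have child_eq2 : ∀ u ∈ K, tcf u = if u = m then main + 1 else main := by
        intro u hu
        rw [child_eq u hu]
        by_cases hum : u = m
        · rw [if_pos hum, if_pos ⟨htrb, by rw [hum]; exact hmin⟩]
        · rw [if_neg hum, if_neg ?_]
          rintro ⟨-, hsome⟩
          rw [hmin] at hsome
          exact hum (Option.some_injective _ hsome).symm
      rcases hc2 with hc | hc
      · have hfe : K.filter (fun u => tcf u = c) = K.erase m := by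
          ext u
          rw [Finset.mem_filter, Finset.mem_erase]
          constructor
          · rintro ⟨hu, htcu⟩
            refine ⟨?_, hu⟩
            intro hum
            rw [child_eq2 u hu, if_pos hum, hc] at htcu
            exact haddne htcu
          · rintro ⟨hum, hu⟩
            exact ⟨hu, by rw [child_eq2 u hu, if_neg hum, hc]⟩
        rw [hfilter, hfe, Finset.card_erase_of_mem hmK]
        have hkpos : 1 ≤ K.card := Finset.card_pos.mpr hKne
        by_cases hvS : v ∈ S'
        · rw [if_pos hvS] at htrb
          rw [if_pos ⟨hvS, by rw [hc]; exact hownmain hvS⟩]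
          right; rw [Nat.odd_iff]; omega
        · rw [if_neg hvS] at htrb
          rw [if_neg (fun hcon => hvS hcon.1)]
          right; rw [Nat.odd_iff]; omega
      · have hfe : K.filter (fun u => tcf u = c) = {m} := by
          ext u
          rw [Finset.mem_filter, Finset.mem_singleton]
          constructor
          · rintro ⟨hu, htcu⟩
            by_contra hum
            rw [child_eq2 u hu, if_neg hum, hc] at htcu
            exact haddne htcu.symm
          · intro hum
            rw [hum]
            exact ⟨hmK, by rw [child_eq2 m hmK, if_pos rfl, hc]⟩
        rw [hfilter, hfe, Finset.card_singleton]
        have hov : ¬(v ∈ S' ∧ tcf v = c) := by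
          rintro ⟨hvS, htv⟩
          rw [hc, ← hownmain hvS] at htv
          exact hno _ htv
        rw [if_neg hov]
        right; decide
  · have child_eq2 : ∀ u ∈ K, tcf u = main := by
      intro u hu
      rw [child_eq u hu, if_neg (fun hcond => htrb hcond.1)]
    rcases hc2 with hc | hc
    · have hfe : K.filter (fun u => tcf u = c) = K :=
        Finset.filter_true_of_mem (fun u hu => by rw [child_eq2 u hu, hc])
      rw [hfilter, hfe]
      by_cases hvS : v ∈ S'
      · rw [if_pos hvS] at htrb
        rw [if_pos ⟨hvS, by rw [hc]; exact hownmain hvS⟩]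
        right; rw [Nat.odd_iff]; omega
      · rw [if_neg hvS] at htrb
        rw [if_neg (fun hcon => hvS hcon.1)]
        right; rw [Nat.odd_iff]; omega
    · have hfe : K.filter (fun u => tcf u = c) = ∅ :=
        Finset.filter_false_of_mem
          (fun u hu => by rw [child_eq2 u hu, hc]; exact fun h => haddne h.symm)
      rw [hfilter, hfe, Finset.card_empty]
      have hov : ¬(v ∈ S' ∧ tcf v = c) := by
        rintro ⟨hvS, htv⟩
        rw [hc, ← hownmain hvS] at htv
        exact hno _ htv
      rw [if_neg hov]
      left; rfl

lemma zmod_two_cases (z : ZMod 2) : z = 0 ∨ z = 1 := by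
  fin_cases z
  · exact Or.inl rfl
  · exact Or.inr rfl

lemma odd_iff_cast (m : ℕ) : Odd m ↔ (m : ZMod 2) = 1 := by
  have h : ((m % 2 : ℕ) : ZMod 2) = (m : ZMod 2) := ZMod.natCast_mod m 2
  rw [Nat.odd_iff]
  constructor
  · intro hm; rw [← h, hm]; decide
  · intro hm
    rcases Nat.mod_two_eq_zero_or_one m with h0 | h1
    · exfalso; rw [← h, h0] at hm; exact absurd hm (by decide)
    · exact h1

/-- existence of a walk of length `n` to the root -/
def chainP (ends : E → Sym2 V) (r : V) : ℕ → V → Prop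
  | 0, v => v = r
  | (n+1), v => ∃ u, (∃ e, ends e = s(v, u)) ∧ chainP ends r n u

lemma exists_chain (ends : E → Sym2 V) (r : V) (v : V)
    (h : Relation.ReflTransGen (fun a b => ∃ e, ends e = s(a, b)) v r) :
    ∃ n, chainP ends r n v := by
  induction h using Relation.ReflTransGen.head_induction_on with
  | refl => exact ⟨0, rfl⟩
  | head hab _ ih =>
    obtain ⟨n, hn⟩ := ih
    exact ⟨n + 1, _, ‹_›, hn⟩

end OddColor3X

open OddColor3X

theorem stmt_2 {V E : Type*} [Fintype V] [Fintype E] [Nonempty V]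
    (ends : E → Sym2 V)
    (hloopless : ∀ e, ¬ (ends e).IsDiag)
    (hconn : ∀ u v : V,
      Relation.ReflTransGen (fun a b => ∃ e, ends e = s(a, b)) u v)
    (heven : Even (Fintype.card V)) :
    ∃ φ : E → Fin 3, ∀ (v : V) (j : Fin 3),
      {e | φ e = j ∧ v ∈ ends e}.ncard = 0 ∨
        Odd {e | φ e = j ∧ v ∈ ends e}.ncard := by
  classical
  by_cases hE : Nonempty E
  case neg =>
    refine ⟨fun e => (hE ⟨e⟩).elim, fun v j => Or.inl ?_⟩
    have h : {e | (fun e => (hE ⟨e⟩).elim : E → Fin 3) e = j ∧ v ∈ ends e} = ∅ :=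
      Set.eq_empty_of_forall_notMem (fun e _ => hE ⟨e⟩)
    rw [h, Set.ncard_empty]
  case pos =>
  have hz2 : ∀ z : ZMod 2, z + z = 0 := by decide
  obtain ⟨r⟩ : Nonempty V := inferInstance
  have hex : ∀ v, ∃ n, chainP ends r n v :=
    fun v => exists_chain ends r v (hconn v r)
  set depth : V → ℕ := fun v => Nat.find (hex v) with hdepth
  have hstep : ∀ v, v ≠ r → ∃ p : V × E, ends p.2 = s(v, p.1) ∧ depth p.1 < depth v := by
    intro v hv
    have h1 : chainP ends r (depth v) v := Nat.find_spec (hex v)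
    have h0 : depth v ≠ 0 := by
      intro h
      rw [h] at h1
      exact hv h1
    obtain ⟨n, hn⟩ := Nat.exists_eq_succ_of_ne_zero h0
    rw [hn] at h1
    obtain ⟨u, ⟨e, he⟩, hu⟩ := h1
    refine ⟨(u, e), he, ?_⟩
    have h2 : depth u ≤ n := Nat.find_le hu
    show depth u < depth v
    omega
  set par : V → V := fun v => if h : v = r then r else (hstep v h).choose.1 with hpar
  set pe : V → E := fun v => if h : v = r then (hE.some) else (hstep v h).choose.2 with hpedef
  have hd : ∀ v, v ≠ r → depth (par v) < depth v := by
    intro v hv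
    have h1 : par v = (hstep v hv).choose.1 := dif_neg hv
    rw [h1]
    exact (hstep v hv).choose_spec.2
  have hpe : ∀ v, v ≠ r → ends (pe v) = s(v, par v) := by
    intro v hv
    have h1 : pe v = (hstep v hv).choose.2 := dif_neg hv
    have h2 : par v = (hstep v hv).choose.1 := dif_neg hv
    rw [h1, h2]
    exact (hstep v hv).choose_spec.1
  -- the non-tree edges
  set X : Finset E := Finset.univ.filter (fun e => ¬ ∃ u, u ≠ r ∧ pe u = e) with hX
  set τ : V → ZMod 2 := fun v => 1 + pdeg ends X v with hτ
  set Vt : Finset V := Finset.univ.filter (fun v => τ v = 1) with hVt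
  set g : E → ZMod 2 :=
    fun e => ∑ w ∈ Vt, (if e ∈ ch r par pe depth hd w then 1 else 0) with hg
  set Sx : Finset E := Finset.univ.filter (fun e => g e = 1) with hSx
  set A0 : Finset E := X ∪ Sx with hA0
  have htwo : ∀ e : E, ((Finset.univ.filter (fun v => v ∈ ends e)).card = 2) := by
    intro e
    obtain ⟨a, b, hab⟩ : ∃ a b, ends e = s(a, b) :=
      Sym2.inductionOn (f := fun z => ∃ a b, z = s(a, b)) (ends e) (fun a b => ⟨a, b, rfl⟩)
    have hne : a ≠ b := by
      intro h
      exact hloopless e (by rw [hab, h]; exact Sym2.mk_isDiag_iff.mpr rfl)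
    have hflt : (Finset.univ.filter (fun v => v ∈ ends e)) = {a, b} := by
      ext v
      simp [hab, Sym2.mem_iff]
    rw [hflt, Finset.card_pair hne]
  have hsum_pdegX : ∑ v, pdeg ends X v = 0 := by
    have h1 : ∀ v : V, pdeg ends X v = ∑ e ∈ X, (if v ∈ ends e then (1 : ZMod 2) else 0) :=
      fun v => pdeg_eq_sum ends X v
    calc ∑ v, pdeg ends X v
        = ∑ v, ∑ e ∈ X, (if v ∈ ends e then (1 : ZMod 2) else 0) :=
          Finset.sum_congr rfl (fun v _ => h1 v)
      _ = ∑ e ∈ X, ∑ v, (if v ∈ ends e then (1 : ZMod 2) else 0) := Finset.sum_comm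
      _ = ∑ e ∈ X, (((Finset.univ.filter (fun v => v ∈ ends e)).card : ℕ) : ZMod 2) := by
          refine Finset.sum_congr rfl (fun e _ => ?_)
          rw [Finset.card_filter]
          push_cast
          rfl
      _ = ∑ e ∈ X, (0 : ZMod 2) := by
          refine Finset.sum_congr rfl (fun e _ => ?_)
          rw [htwo e]
          decide
      _ = 0 := Finset.sum_const_zero
  have hcardV : ((Fintype.card V : ℕ) : ZMod 2) = 0 := by
    obtain ⟨k, hk⟩ := heven
    rw [hk]
    push_cast
    exact hz2 _
  have hSt : ∑ v, τ v = 0 := by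
    simp only [hτ]
    rw [Finset.sum_add_distrib, hsum_pdegX, Finset.sum_const, Finset.card_univ]
    rw [nsmul_eq_mul, mul_one, hcardV, add_zero]
  have hτ01 : ∀ v, (if v ∈ Vt then (1 : ZMod 2) else 0) = τ v := by
    intro v
    by_cases h : v ∈ Vt
    · rw [if_pos h, hVt] at *
      exact ((Finset.mem_filter.mp h).2).symm
    · rw [if_neg h]
      rcases zmod_two_cases (τ v) with h1 | h1
      · exact h1.symm
      · exact absurd (Finset.mem_filter.mpr ⟨Finset.mem_univ v, h1⟩) h
  have hVtcard : ((Vt.card : ℕ) : ZMod 2) = 0 := by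
    rw [← hSt]
    rw [hVt, Finset.card_filter]
    push_cast
    refine Finset.sum_congr rfl (fun v _ => ?_)
    rcases zmod_two_cases (τ v) with h | h
    · rw [h, if_neg (show ¬(0 : ZMod 2) = 1 by decide)]
    · rw [h, if_pos rfl]
  have hpdegSx : ∀ u, pdeg ends Sx u = τ u := by
    intro u
    rw [pdeg_eq_sum, hSx]
    rw [Finset.sum_filter]
    have h1 : ∀ e : E, (if g e = 1 then (if u ∈ ends e then (1 : ZMod 2) else 0) else 0)
        = g e * (if u ∈ ends e then (1 : ZMod 2) else 0) := by
      intro e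
      rcases zmod_two_cases (g e) with h | h
      · rw [h, zero_mul, if_neg (show ¬(0 : ZMod 2) = 1 by decide)]
      · rw [h, one_mul, if_pos rfl]
    rw [Finset.sum_congr rfl (fun e _ => h1 e)]
    have h2 : ∀ e : E, g e * (if u ∈ ends e then (1 : ZMod 2) else 0)
        = ∑ w ∈ Vt, (if e ∈ ch r par pe depth hd w then (1 : ZMod 2) else 0)
            * (if u ∈ ends e then (1 : ZMod 2) else 0) := by
      intro e
      rw [hg, Finset.sum_mul]
    rw [Finset.sum_congr rfl (fun e _ => h2 e)]
    rw [Finset.sum_comm]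
    have h3 : ∀ w ∈ Vt, (∑ e : E, (if e ∈ ch r par pe depth hd w then (1 : ZMod 2) else 0)
        * (if u ∈ ends e then (1 : ZMod 2) else 0))
        = (if u = w then (1 : ZMod 2) else 0) + (if u = r then (1 : ZMod 2) else 0) := by
      intro w _
      have h4 : ∀ e : E, (if e ∈ ch r par pe depth hd w then (1 : ZMod 2) else 0)
          * (if u ∈ ends e then (1 : ZMod 2) else 0)
          = (if e ∈ ch r par pe depth hd w then (if u ∈ ends e then (1 : ZMod 2) else 0) else 0) := by
        intro e
        by_cases h : e ∈ ch r par pe depth hd w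
        · rw [if_pos h, if_pos h, one_mul]
        · rw [if_neg h, if_neg h, zero_mul]
      rw [Finset.sum_congr rfl (fun e _ => h4 e)]
      rw [Finset.sum_ite_mem, Finset.univ_inter, ← pdeg_eq_sum]
      exact ch_pdeg ends r par pe depth hd hpe (depth w) w le_rfl u
    rw [Finset.sum_congr rfl h3, Finset.sum_add_distrib]
    have h5 : (∑ w ∈ Vt, if u = w then (1 : ZMod 2) else 0) = if u ∈ Vt then 1 else 0 := by
      rw [Finset.sum_ite_eq]
    have h6 : (∑ w ∈ Vt, if u = r then (1 : ZMod 2) else 0) = 0 := by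
      rw [Finset.sum_const, nsmul_eq_mul, hVtcard, zero_mul]
    rw [h5, h6, add_zero, hτ01]
  have hSxtree : ∀ e ∈ Sx, ∃ u, u ≠ r ∧ pe u = e := by
    intro e he
    rw [hSx, Finset.mem_filter] at he
    have hgw : ∃ w ∈ Vt, e ∈ ch r par pe depth hd w := by
      by_contra h
      push_neg at h
      have h0 : g e = 0 := Finset.sum_eq_zero (fun w hw => if_neg (h w hw))
      rw [h0] at he
      exact absurd he.2 (by decide)
    obtain ⟨w, _, hew⟩ := hgw
    obtain ⟨u, hur, hpeu, _⟩ := ch_mem r par pe depth hd (depth w) w le_rfl e hew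
    exact ⟨u, hur, hpeu⟩
  have hdisj : Disjoint X Sx := by
    rw [Finset.disjoint_left]
    intro e heX heSx
    rw [hX, Finset.mem_filter] at heX
    exact heX.2 (hSxtree e heSx)
  have hpdegA0 : ∀ u, pdeg ends A0 u = 1 := by
    intro u
    have h1 : pdeg ends A0 u = pdeg ends X u + pdeg ends Sx u := by
      rw [hA0, pdeg, pdeg, pdeg, Finset.filter_union,
        Finset.card_union_of_disjoint (Finset.disjoint_filter_filter hdisj)]
      push_cast
      ring
    rw [h1, hpdegSx]
    simp only [hτ]
    rcases zmod_two_cases (pdeg ends X u) with h | h <;> rw [h] <;> decide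
  have hA0odd : ∀ u, Odd ((A0.filter (fun e => u ∈ ends e)).card) := by
    intro u
    rw [odd_iff_cast]
    exact hpdegA0 u
  set S' : Finset V := Finset.univ.filter (fun u => u ≠ r ∧ pe u ∉ A0) with hS'def
  have hS'r : ∀ u ∈ S', u ≠ r := by
    intro u hu
    rw [hS'def, Finset.mem_filter] at hu
    exact hu.2.1
  have hS'A0 : ∀ u ∈ S', pe u ∉ A0 := by
    intro u hu
    rw [hS'def, Finset.mem_filter] at hu
    exact hu.2.2
  have hS'mem : ∀ u, u ≠ r → pe u ∉ A0 → u ∈ S' := by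
    intro u h1 h2
    rw [hS'def, Finset.mem_filter]
    exact ⟨Finset.mem_univ u, h1, h2⟩
  set mn : Finset V → Option V := fun s => if h : s.Nonempty then some h.choose else none
    with hmndef
  have hmn : ∀ s : Finset V, s.Nonempty → ∃ m, m ∈ s ∧ mn s = some m := by
    intro s hs
    refine ⟨hs.choose, hs.choose_spec, ?_⟩
    simp only [hmndef]
    rw [dif_pos hs]
  set tcf : V → Fin 2 := tc r par depth S' mn hd with htcf
  set inv : E → V := fun e => if h : ∃ u, u ≠ r ∧ pe u = e then h.choose else r with hinvdef
  have hinvpe : ∀ u, u ≠ r → inv (pe u) = u := by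
    intro u hu
    have hex2 : ∃ w, w ≠ r ∧ pe w = pe u := ⟨u, hu, rfl⟩
    have h1 : inv (pe u) = hex2.choose := dif_pos hex2
    rw [h1]
    exact peinj ends r par pe depth hd hpe _ u hex2.choose_spec.1 hu hex2.choose_spec.2
  have hinv : ∀ e, e ∉ A0 → (inv e ≠ r ∧ pe (inv e) = e) := by
    intro e he
    have heX : e ∉ X := fun h => he (Finset.mem_union_left _ h)
    have hex2 : ∃ u, u ≠ r ∧ pe u = e := by
      by_contra h
      exact heX (by rw [hX, Finset.mem_filter]; exact ⟨Finset.mem_univ _, h⟩)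
    have h1 : inv e = hex2.choose := dif_pos hex2
    rw [h1]
    exact hex2.choose_spec
  set φ : E → Fin 3 := fun e => if e ∈ A0 then 0 else Fin.succ (tcf (inv e)) with hphi
  have hφ0 : ∀ e, e ∈ A0 → φ e = 0 := fun e he => if_pos he
  have hφs : ∀ e, e ∉ A0 → φ e = Fin.succ (tcf (inv e)) := fun e he => if_neg he
  refine ⟨φ, ?_⟩
  intro v j
  have hkey : ∀ c : Fin 2,
      (Finset.univ.filter (fun e => φ e = Fin.succ c ∧ v ∈ ends e)).card = 0 ∨
      Odd (Finset.univ.filter (fun e => φ e = Fin.succ c ∧ v ∈ ends e)).card := by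
    intro c
    have himg : Finset.univ.filter (fun e => φ e = Fin.succ c ∧ v ∈ ends e)
        = (S'.filter (fun u => tcf u = c ∧ (u = v ∨ par u = v))).image pe := by
      ext e
      simp only [Finset.mem_filter, Finset.mem_univ, true_and, Finset.mem_image]
      constructor
      · rintro ⟨hφe, hv⟩
        have heA : e ∉ A0 := by
          intro h
          rw [hφ0 e h] at hφe
          exact (Fin.succ_ne_zero c) hφe.symm
        obtain ⟨hir, hpei⟩ := hinv e heA
        have htci : tcf (inv e) = c := by
          have h2 : Fin.succ (tcf (inv e)) = Fin.succ c := by rw [← hφs e heA, hφe]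
          exact Fin.succ_injective _ h2
        have hvin : v = inv e ∨ v = par (inv e) := by
          rw [← hpei] at hv
          exact (mem_pe ends r par pe hpe (inv e) hir v).mp hv
        exact ⟨inv e, ⟨hS'mem (inv e) hir (by rw [hpei]; exact heA), htci,
          hvin.imp Eq.symm Eq.symm⟩, hpei⟩
      · rintro ⟨u, ⟨huS, htcu, hor⟩, rfl⟩
        have hur : u ≠ r := hS'r u huS
        constructor
        · rw [hφs (pe u) (hS'A0 u huS), hinvpe u hur, htcu]
        · exact (mem_pe ends r par pe hpe u hur v).mpr (hor.imp Eq.symm Eq.symm)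
    rw [himg]
    rw [Finset.card_image_of_injOn (fun a ha b hb hab =>
      peinj ends r par pe depth hd hpe a b
        (hS'r a (Finset.mem_filter.mp ha).1) (hS'r b (Finset.mem_filter.mp hb).1) hab)]
    have hsplit : (S'.filter (fun u => tcf u = c ∧ (u = v ∨ par u = v)))
        = (if v ∈ S' ∧ tcf v = c then {v} else ∅)
          ∪ (S'.filter (fun u => par u = v ∧ tcf u = c)) := by
      ext u
      simp only [Finset.mem_union, Finset.mem_filter]
      constructor
      · rintro ⟨huS, htcu, hor⟩
        rcases hor with h1 | h1
        · left
          subst h1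
          rw [if_pos ⟨huS, htcu⟩]
          exact Finset.mem_singleton_self u
        · right; exact ⟨huS, h1, htcu⟩
      · rintro (h1 | ⟨huS, hpar2, htcu⟩)
        · by_cases hc' : v ∈ S' ∧ tcf v = c
          · rw [if_pos hc'] at h1
            rw [Finset.mem_singleton] at h1
            rw [h1]
            exact ⟨hc'.1, hc'.2, Or.inl rfl⟩
          · rw [if_neg hc'] at h1
            exact absurd h1 (Finset.notMem_empty u)
        · exact ⟨huS, htcu, Or.inr hpar2⟩
    have hdisj2 : Disjoint (if v ∈ S' ∧ tcf v = c then ({v} : Finset V) else ∅)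
        (S'.filter (fun u => par u = v ∧ tcf u = c)) := by
      by_cases hc' : v ∈ S' ∧ tcf v = c
      · rw [if_pos hc']
        rw [Finset.disjoint_singleton_left]
        intro hvmem
        rw [Finset.mem_filter] at hvmem
        exact parne r par depth hd v (hS'r v hvmem.1) hvmem.2.1
      · rw [if_neg hc']
        exact Finset.disjoint_empty_left _
    rw [hsplit, Finset.card_union_of_disjoint hdisj2]
    have hcard1 : (if v ∈ S' ∧ tcf v = c then ({v} : Finset V) else ∅).card
        = (if v ∈ S' ∧ tcf v = c then 1 else 0) := by
      by_cases hc' : v ∈ S' ∧ tcf v = c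
      · rw [if_pos hc', if_pos hc', Finset.card_singleton]
      · rw [if_neg hc', if_neg hc', Finset.card_empty]
    rw [hcard1]
    exact verify r par depth hd S' mn hmn hS'r v c
  have h1eq : (1 : Fin 3) = Fin.succ (0 : Fin 2) := rfl
  have h2eq : (2 : Fin 3) = Fin.succ (1 : Fin 2) := rfl
  have hj : j = (0 : Fin 3) ∨ j = 1 ∨ j = 2 := by
    fin_cases j
    · exact Or.inl rfl
    · exact Or.inr (Or.inl rfl)
    · exact Or.inr (Or.inr rfl)
  rcases hj with rfl | rfl | rfl
  · have heq : {e | φ e = (0 : Fin 3) ∧ v ∈ ends e} = ↑(A0.filter (fun e => v ∈ ends e)) := by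
      ext e
      simp only [Set.mem_setOf_eq, Finset.coe_filter, Finset.mem_coe, Finset.mem_filter]
      constructor
      · rintro ⟨hφe, hv⟩
        refine ⟨?_, hv⟩
        by_contra h
        rw [hφs e h] at hφe
        exact Fin.succ_ne_zero _ hφe
      · rintro ⟨he, hv⟩
        exact ⟨hφ0 e he, hv⟩
    rw [heq, Set.ncard_coe_finset]
    exact Or.inr (hA0odd v)
  · have heq : {e | φ e = (1 : Fin 3) ∧ v ∈ ends e}
        = ↑(Finset.univ.filter (fun e => φ e = Fin.succ (0 : Fin 2) ∧ v ∈ ends e)) := by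
      ext e
      simp only [Set.mem_setOf_eq, Finset.coe_filter, Finset.mem_coe, Finset.mem_filter,
        Finset.mem_univ, true_and]
      rw [h1eq]
    rw [heq, Set.ncard_coe_finset]
    exact hkey 0
  · have heq : {e | φ e = (2 : Fin 3) ∧ v ∈ ends e}
        = ↑(Finset.univ.filter (fun e => φ e = Fin.succ (1 : Fin 2) ∧ v ∈ ends e)) := by
      ext e
      simp only [Set.mem_setOf_eq, Finset.coe_filter, Finset.mem_coe, Finset.mem_filter,
        Finset.mem_univ, true_and]
      rw [h2eq]
    rw [heq, Set.ncard_coe_finset]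
    exact hkey 1
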